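/- Assume 0 < α < 1, 0 < β < 1, a > 0, b > 0, c > 0, and that ‖f_i‖ ≤ c, ‖w_j‖ ≤ c, ‖u_k‖ ≤ c for all i, j, k. Assume that for every i: P_I(i) ≥ α, P_C(i) ≥ β, ∑_{j ≠ i} exp(⟪f_i, w_j⟫) ≥ a, and ∑_{k ≠ y^C(i)} exp(⟪f_i, u_k⟫) ≥ b. Set A = 2c² − 2 log(aα/(1−α)) and B = 2c² − 2 log(bβ/(1−β)). Then for every i, ⟪f_i, w̄_{y^F(i)} − w_i⟫ ≥ −(2c(z−1)/z)(√A + √B). -/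

import Mathlib

open Finset Real
open scoped RealInnerProductSpace BigOperators

/-- Softmax lower bound: if the softmax probability `e/(e+R)` is at least `α`
and the residual `R` is at least `a`, then `e ≥ aα/(1-α)`. -/
lemma softmax_key {e R a α : ℝ} (he : 0 < e) (hR : a ≤ R) (ha : 0 < a)
    (hα : 0 < α) (hα1 : α < 1) (h : α ≤ e / (e + R)) :
    a * α / (1 - α) ≤ e := by
  have hRpos : 0 < R := lt_of_lt_of_le ha hR
  have hpos : 0 < e + R := by linarith
  rw [le_div_iff₀ hpos] at h
  rw [div_le_iff₀ (by linarith : (0:ℝ) < 1 - α)]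
  nlinarith

/-- under instance- and coarse-classification guarantees, for every `i`,
`⟪f_i, w̄_{y^F(i)} − w_i⟫ ≥ −(2c(z−1)/z)(√A + √B)` where
`A = 2c² − 2 log(aα/(1−α))` and `B = 2c² − 2 log(bβ/(1−β))`. -/
theorem mean_weight_inner_diff_lower_bound
    {d n F C z : ℕ} (hz : 0 < z) (hzF : z * F = n)
    (f w : Fin n → EuclideanSpace ℝ (Fin d))
    (yF : Fin n → Fin F)
    (hcard : ∀ s : Fin F, (Finset.univ.filter (fun j => yF j = s)).card = z)
    (wbar : Fin F → EuclideanSpace ℝ (Fin d))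
    (hwbar : ∀ s : Fin F,
      wbar s = (z : ℝ)⁻¹ • ∑ j ∈ Finset.univ.filter (fun j => yF j = s), w j)
    (yC : Fin n → Fin C)
    (hcompat : ∀ i j : Fin n, yF i = yF j → yC i = yC j)
    (u : Fin C → EuclideanSpace ℝ (Fin d))
    (PI PC : Fin n → ℝ)
    (hPI : ∀ i, PI i = Real.exp ⟪f i, w i⟫ / ∑ j, Real.exp ⟪f i, w j⟫)
    (hPC : ∀ i, PC i = Real.exp ⟪f i, u (yC i)⟫ / ∑ k, Real.exp ⟪f i, u k⟫)
    (α β a b c : ℝ)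
    (hα : 0 < α) (hα1 : α < 1) (hβ : 0 < β) (hβ1 : β < 1)
    (ha : 0 < a) (hb : 0 < b) (hc : 0 < c)
    (hfnorm : ∀ i, ‖f i‖ ≤ c) (hwnorm : ∀ j, ‖w j‖ ≤ c) (hunorm : ∀ k, ‖u k‖ ≤ c)
    (hPIα : ∀ i, PI i ≥ α) (hPCβ : ∀ i, PC i ≥ β)
    (hresI : ∀ i, ∑ j ∈ Finset.univ.filter (fun j => j ≠ i), Real.exp ⟪f i, w j⟫ ≥ a)
    (hresC : ∀ i, ∑ k ∈ Finset.univ.filter (fun k => k ≠ yC i), Real.exp ⟪f i, u k⟫ ≥ b)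
    (A B : ℝ)
    (hA : A = 2 * c ^ 2 - 2 * Real.log (a * α / (1 - α)))
    (hB : B = 2 * c ^ 2 - 2 * Real.log (b * β / (1 - β))) :
    ∀ i : Fin n,
      ⟪f i, wbar (yF i) - w i⟫ ≥
        -(2 * c * ((z : ℝ) - 1) / (z : ℝ)) * (Real.sqrt A + Real.sqrt B) := by
  -- Step 1: instance bound gives ⟪f j, w j⟫ ≥ log(aα/(1-α)) for all j.
  have hAin : ∀ j : Fin n, Real.log (a * α / (1 - α)) ≤ ⟪f j, w j⟫ := by
    intro j
    have hsplit : (∑ k, Real.exp ⟪f j, w k⟫) =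
        Real.exp ⟪f j, w j⟫ +
          ∑ k ∈ Finset.univ.filter (fun k => k ≠ j), Real.exp ⟪f j, w k⟫ := by
      rw [Finset.filter_ne']
      exact (Finset.add_sum_erase _ _ (Finset.mem_univ j)).symm
    have h1 := hPIα j
    rw [hPI j, hsplit] at h1
    have h2 := softmax_key (Real.exp_pos _) (hresI j) ha hα hα1 h1
    have hpos : 0 < a * α / (1 - α) := div_pos (by positivity) (by linarith)
    calc Real.log (a * α / (1 - α)) ≤ Real.log (Real.exp ⟪f j, w j⟫) :=
          Real.log_le_log hpos h2
      _ = ⟪f j, w j⟫ := Real.log_exp _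
  have hBin : ∀ j : Fin n, Real.log (b * β / (1 - β)) ≤ ⟪f j, u (yC j)⟫ := by
    intro j
    have hsplit : (∑ k, Real.exp ⟪f j, u k⟫) =
        Real.exp ⟪f j, u (yC j)⟫ +
          ∑ k ∈ Finset.univ.filter (fun k => k ≠ yC j), Real.exp ⟪f j, u k⟫ := by
      rw [Finset.filter_ne']
      exact (Finset.add_sum_erase _ _ (Finset.mem_univ (yC j))).symm
    have h1 := hPCβ j
    rw [hPC j, hsplit] at h1
    have h2 := softmax_key (Real.exp_pos _) (hresC j) hb hβ hβ1 h1
    have hpos : 0 < b * β / (1 - β) := div_pos (by positivity) (by linarith)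
    calc Real.log (b * β / (1 - β)) ≤ Real.log (Real.exp ⟪f j, u (yC j)⟫) :=
          Real.log_le_log hpos h2
      _ = ⟪f j, u (yC j)⟫ := Real.log_exp _
  -- Step 2: distance bounds.
  have hdA : ∀ j : Fin n, ‖f j - w j‖ ≤ Real.sqrt A := by
    intro j
    rw [show Real.sqrt A = Real.sqrt A from rfl]
    have hsq : ‖f j - w j‖ ^ 2 ≤ A := by
      have := norm_sub_sq_real (f j) (w j)
      have h1 := hAin j
      have h2 := hfnorm j
      have h3 := hwnorm j
      have hf2 : ‖f j‖ ^ 2 ≤ c ^ 2 := by nlinarith [norm_nonneg (f j)]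
      have hw2 : ‖w j‖ ^ 2 ≤ c ^ 2 := by nlinarith [norm_nonneg (w j)]
      rw [hA]; nlinarith
    calc ‖f j - w j‖ = Real.sqrt (‖f j - w j‖ ^ 2) :=
          (Real.sqrt_sq (norm_nonneg _)).symm
      _ ≤ Real.sqrt A := Real.sqrt_le_sqrt hsq
  have hdB : ∀ j : Fin n, ‖f j - u (yC j)‖ ≤ Real.sqrt B := by
    intro j
    have hsq : ‖f j - u (yC j)‖ ^ 2 ≤ B := by
      have := norm_sub_sq_real (f j) (u (yC j))
      have h1 := hBin j
      have h2 := hfnorm j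
      have h3 := hunorm (yC j)
      have hf2 : ‖f j‖ ^ 2 ≤ c ^ 2 := by nlinarith [norm_nonneg (f j)]
      have hu2 : ‖u (yC j)‖ ^ 2 ≤ c ^ 2 := by nlinarith [norm_nonneg (u (yC j))]
      rw [hB]; nlinarith
    calc ‖f j - u (yC j)‖ = Real.sqrt (‖f j - u (yC j)‖ ^ 2) :=
          (Real.sqrt_sq (norm_nonneg _)).symm
      _ ≤ Real.sqrt B := Real.sqrt_le_sqrt hsq
  have hsA : 0 ≤ Real.sqrt A := Real.sqrt_nonneg A
  have hsB : 0 ≤ Real.sqrt B := Real.sqrt_nonneg B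
  intro i
  set T := Finset.univ.filter (fun j => yF j = yF i) with hT
  have hiT : i ∈ T := by simp [hT]
  -- each term bound
  have hterm : ∀ j ∈ T, j ≠ i →
      -(2 * c * (Real.sqrt A + Real.sqrt B)) ≤ ⟪f i, w j - w i⟫ := by
    intro j hjT hji
    have hyC : yC j = yC i := hcompat j i (by simpa [hT] using hjT)
    have hdec : w j - w i = (w j - f j) + (f j - u (yC i)) + (u (yC i) - f i)
        + (f i - w i) := by abel
    have hib : ∀ v : EuclideanSpace ℝ (Fin d), -(c * ‖v‖) ≤ ⟪f i, v⟫ := by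
      intro v
      have h1 : |⟪f i, v⟫| ≤ ‖f i‖ * ‖v‖ := abs_real_inner_le_norm _ _
      have h2 : ‖f i‖ * ‖v‖ ≤ c * ‖v‖ :=
        mul_le_mul_of_nonneg_right (hfnorm i) (norm_nonneg v)
      have := neg_abs_le ⟪f i, v⟫
      linarith
    have e1 := hib (w j - f j)
    have e2 := hib (f j - u (yC i))
    have e3 := hib (u (yC i) - f i)
    have e4 := hib (f i - w i)
    have n1 : ‖w j - f j‖ ≤ Real.sqrt A := by
      rw [norm_sub_rev]; exact hdA j
    have n2 : ‖f j - u (yC i)‖ ≤ Real.sqrt B := by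
      rw [← hyC]; exact hdB j
    have n3 : ‖u (yC i) - f i‖ ≤ Real.sqrt B := by
      rw [norm_sub_rev]; exact hdB i
    have n4 : ‖f i - w i‖ ≤ Real.sqrt A := hdA i
    have hc1 : -(c * Real.sqrt A) ≤ ⟪f i, w j - f j⟫ := by
      have := mul_le_mul_of_nonneg_left n1 hc.le; linarith
    have hc2 : -(c * Real.sqrt B) ≤ ⟪f i, f j - u (yC i)⟫ := by
      have := mul_le_mul_of_nonneg_left n2 hc.le; linarith
    have hc3 : -(c * Real.sqrt B) ≤ ⟪f i, u (yC i) - f i⟫ := by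
      have := mul_le_mul_of_nonneg_left n3 hc.le; linarith
    have hc4 : -(c * Real.sqrt A) ≤ ⟪f i, f i - w i⟫ := by
      have := mul_le_mul_of_nonneg_left n4 hc.le; linarith
    calc -(2 * c * (Real.sqrt A + Real.sqrt B))
        = -(c * Real.sqrt A) + -(c * Real.sqrt B) + -(c * Real.sqrt B)
          + -(c * Real.sqrt A) := by ring
      _ ≤ ⟪f i, w j - f j⟫ + ⟪f i, f j - u (yC i)⟫ + ⟪f i, u (yC i) - f i⟫
          + ⟪f i, f i - w i⟫ := by
            gcongr
      _ = ⟪f i, w j - w i⟫ := by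
            rw [hdec, inner_add_right, inner_add_right, inner_add_right]
  -- sum over the fine class
  have hzR : (0:ℝ) < (z:ℝ) := by exact_mod_cast hz
  have hcardT : T.card = z := hcard (yF i)
  have hsum : ((z:ℝ) - 1) * (-(2 * c * (Real.sqrt A + Real.sqrt B)))
      ≤ ∑ j ∈ T, ⟪f i, w j - w i⟫ := by
    have hsplit : ∑ j ∈ T, ⟪f i, w j - w i⟫
        = ⟪f i, w i - w i⟫ + ∑ j ∈ T.erase i, ⟪f i, w j - w i⟫ :=
      (Finset.add_sum_erase _ _ hiT).symm
    have hzero : ⟪f i, w i - w i⟫ = (0:ℝ) := by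
      simp
    have hcarde : (T.erase i).card = z - 1 := by
      rw [Finset.card_erase_of_mem hiT, hcardT]
    have hlb : ∀ j ∈ T.erase i,
        -(2 * c * (Real.sqrt A + Real.sqrt B)) ≤ ⟪f i, w j - w i⟫ := by
      intro j hj
      exact hterm j (Finset.mem_of_mem_erase hj) (Finset.ne_of_mem_erase hj)
    have := Finset.card_nsmul_le_sum (T.erase i) _ _ hlb
    rw [hcarde, nsmul_eq_mul] at this
    have hcast : ((z - 1 : ℕ) : ℝ) = (z:ℝ) - 1 := by
      have : (1:ℕ) ≤ z := hz
      push_cast [this]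
      ring
    rw [hcast] at this
    rw [hsplit, hzero]
    linarith
  -- rewrite the goal
  have hmean : wbar (yF i) - w i = (z:ℝ)⁻¹ • ∑ j ∈ T, (w j - w i) := by
    rw [hwbar (yF i), Finset.sum_sub_distrib, smul_sub, Finset.sum_const, hcardT]
    congr 1
    rw [← Nat.cast_smul_eq_nsmul ℝ, smul_smul, inv_mul_cancel₀ hzR.ne', one_smul]
  have hinner : ⟪f i, wbar (yF i) - w i⟫
      = (z:ℝ)⁻¹ * ∑ j ∈ T, ⟪f i, w j - w i⟫ := by
    rw [hmean, real_inner_smul_right, inner_sum]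
  rw [hinner, ge_iff_le]
  have h1 : (z:ℝ)⁻¹ * (((z:ℝ) - 1) * (-(2 * c * (Real.sqrt A + Real.sqrt B))))
      ≤ (z:ℝ)⁻¹ * ∑ j ∈ T, ⟪f i, w j - w i⟫ :=
    mul_le_mul_of_nonneg_left hsum (by positivity)
  calc -(2 * c * ((z : ℝ) - 1) / (z : ℝ)) * (Real.sqrt A + Real.sqrt B)
      = (z:ℝ)⁻¹ * (((z:ℝ) - 1) * (-(2 * c * (Real.sqrt A + Real.sqrt B)))) := by
        have hne : (z:ℝ) ≠ 0 := hzR.ne'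
        field_simp
    _ ≤ _ := h1
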